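/- arXiv:1908.05921 — 2 statements merged into one kernel-verified Lean document; each statement's English description precedes it below -/
import Mathlib

section
/- If U is a nontrivial non-essential submodule of M whose degree in the proper sum-essential graph N(M) equals 1, then U is a uniform module, every nonzero submodule B ⊆ U with B a vertex of N(M) also has degree 1, and every complement of U in M is a semisimple module. -/
variable {R : Type*} [Ring R] {M : Type*} [AddCommGroup M] [Module R M]

/-- `N` is an essential submodule of `M`: it intersects every nonzero submodule nontrivially. -/
def IsEssentialSubmodule (N : Submodule R M) : Prop :=
  ∀ B : Submodule R M, B ≠ ⊥ → N ⊓ B ≠ ⊥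

/-- A vertex of the sum-essential graph `S(M)`: a nontrivial submodule. -/
def IsVertexS (N : Submodule R M) : Prop := N ≠ ⊥ ∧ N ≠ ⊤

/-- Adjacency in the sum-essential graph `S(M)`. -/
def AdjS (A B : Submodule R M) : Prop :=
  IsVertexS A ∧ IsVertexS B ∧ A ≠ B ∧ IsEssentialSubmodule (A ⊔ B)

/-- A vertex of the proper sum-essential graph `N(M)`: a nontrivial non-essential submodule. -/
def IsVertexP (N : Submodule R M) : Prop :=
  N ≠ ⊥ ∧ N ≠ ⊤ ∧ ¬ IsEssentialSubmodule N

/-- Adjacency in the proper sum-essential graph `N(M)`. -/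
def AdjP (A B : Submodule R M) : Prop :=
  IsVertexP A ∧ IsVertexP B ∧ A ≠ B ∧ IsEssentialSubmodule (A ⊔ B)

/-- `U` is a uniform submodule: nonzero, and any two nonzero submodules of it intersect. -/
def UniformSubmodule (U : Submodule R M) : Prop :=
  U ≠ ⊥ ∧ ∀ A B : Submodule R M, A ≤ U → B ≤ U → A ≠ ⊥ → B ≠ ⊥ → A ⊓ B ≠ ⊥

/-- `C` is a complement of `U` in `M`: maximal with respect to `U ⊓ C = ⊥`. -/
def IsComplementOf (C U : Submodule R M) : Prop :=
  U ⊓ C = ⊥ ∧ ∀ D : Submodule R M, U ⊓ D = ⊥ → C ≤ D → D = C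

/-- Zorn: extend any submodule disjoint from `U` to a complement of `U`. -/
theorem exists_complement_ext (U X : Submodule R M) (hX : U ⊓ X = ⊥) :
    ∃ D : Submodule R M, X ≤ D ∧ IsComplementOf D U := by
  obtain ⟨D, hXD, hDmem, hDmax⟩ := zorn_le_nonempty₀
    {D : Submodule R M | U ⊓ D = ⊥}
    (fun c hc hchain y hy => by
      refine ⟨sSup c, ?_, fun z hz => le_sSup hz⟩
      rw [Set.mem_setOf_eq, eq_bot_iff]
      intro x hx
      obtain ⟨hxU, hxS⟩ := hx
      have hne : c.Nonempty := ⟨y, hy⟩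
      rw [SetLike.mem_coe] at hxU hxS
      rw [sSup_eq_iSup'] at hxS
      have : Nonempty c := ⟨⟨y, hy⟩⟩
      rw [Submodule.mem_iSup_of_directed _ (hchain.directedOn.directed_val)] at hxS
      obtain ⟨⟨D, hD⟩, hxD⟩ := hxS
      have := hc hD
      rw [Set.mem_setOf_eq, eq_bot_iff] at this
      exact this ⟨hxU, hxD⟩) X hX
  exact ⟨D, hXD, hDmem, fun D' hD' hle => le_antisymm (hDmax hD' hle) hle⟩

/-- A complement sum is essential. -/
theorem complement_sup_essential {C U : Submodule R M} (h : IsComplementOf C U) :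
    IsEssentialSubmodule (U ⊔ C) := by
  intro X hX hbot
  apply hX
  have hUCX : U ⊓ (C ⊔ X) = ⊥ := by
    rw [eq_bot_iff]
    rintro u ⟨huU, huCX⟩
    rw [SetLike.mem_coe] at huU huCX
    rw [Submodule.mem_sup] at huCX
    obtain ⟨c, hc, x, hx, rfl⟩ := huCX
    have hxm : x ∈ (U ⊔ C) ⊓ X := by
      refine ⟨?_, hx⟩
      have : x = (c + x) - c := by abel
      rw [this]
      exact sub_mem (Submodule.mem_sup_left huU) (Submodule.mem_sup_right hc)
    rw [hbot] at hxm
    simp only [Submodule.mem_bot] at hxm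
    subst hxm
    rw [add_zero] at huU
    have : c ∈ U ⊓ C := Submodule.mem_inf.mpr ⟨huU, hc⟩
    rw [h.1] at this
    simpa using this
  have := h.2 (C ⊔ X) hUCX le_sup_left
  have hXC : X ≤ C := le_sup_right.trans this.le
  rw [eq_bot_iff]
  intro x hx
  have : x ∈ (U ⊔ C) ⊓ X := ⟨Submodule.mem_sup_right (hXC hx), hx⟩
  rw [hbot] at this
  exact this

/-- Any complement of a vertex `U` of `N(M)` is adjacent to `U`. -/
theorem adjP_of_complement {U C : Submodule R M} (hU : IsVertexP U) (hC : IsComplementOf C U) :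
    AdjP U C := by
  have hCbot : C ≠ ⊥ := by
    intro h0
    apply hU.2.2
    intro B hB hUB
    exact hB (by rw [hC.2 B hUB (by rw [h0]; exact bot_le), h0])
  have hCtop : C ≠ ⊤ := by
    intro h1
    apply hU.1
    have := hC.1
    rwa [h1, inf_top_eq] at this
  refine ⟨hU, ⟨hCbot, hCtop, ?_⟩, ?_, complement_sup_essential hC⟩
  · intro hess
    exact hess U hU.1 (by rw [inf_comm]; exact hC.1)
  · intro hEq
    apply hU.1
    rw [hEq] at hC ⊢
    simpa using hC.1

theorem essential_mono {N N' : Submodule R M} (h : N ≤ N') (he : IsEssentialSubmodule N) :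
    IsEssentialSubmodule N' := fun B hB hb =>
  he B hB (eq_bot_iff.mpr (le_trans (inf_le_inf_right B h) hb.le))


/-- If a vertex `U` of `N(M)` has degree 1, then `U` is uniform,
every vertex `B ⊆ U` of `N(M)` also has degree 1, and every complement of `U`
in `M` is a semisimple module. -/
theorem stmt11 (U : Submodule R M) (hU : IsVertexP U) (hdeg : ∃! C, AdjP U C) :
    UniformSubmodule U ∧
    (∀ B : Submodule R M, B ≤ U → IsVertexP B → ∃! C, AdjP B C) ∧
    (∀ C : Submodule R M, IsComplementOf C U → IsSemisimpleModule R ↥C) := by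
  obtain ⟨C₀, hC₀adj, hC₀uniq⟩ := hdeg
  have huniform : U ≠ ⊥ ∧ ∀ A B : Submodule R M, A ≤ U → B ≤ U → A ≠ ⊥ → B ≠ ⊥ → A ⊓ B ≠ ⊥ := by
    refine ⟨hU.1, ?_⟩
    intro A B hAU hBU hA hB hAB
    obtain ⟨C, -, hC⟩ := exists_complement_ext U ⊥ (by simp)
    have hCadj : AdjP U C := adjP_of_complement hU hC
    have hABC : A ⊓ (B ⊔ C) = ⊥ := by
      rw [eq_bot_iff]
      rintro a ⟨haA, haBC⟩
      rw [SetLike.mem_coe] at haA haBC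
      rw [Submodule.mem_sup] at haBC
      obtain ⟨b, hb, c, hc, hsum⟩ := haBC
      have hcUC : c ∈ U ⊓ C := Submodule.mem_inf.mpr
        ⟨by
          have : c = a - b := by rw [← hsum]; abel
          rw [this]; exact sub_mem (hAU haA) (hBU hb), hc⟩
      rw [hC.1, Submodule.mem_bot] at hcUC
      subst hcUC
      rw [add_zero] at hsum
      subst hsum
      have : b ∈ A ⊓ B := Submodule.mem_inf.mpr ⟨haA, hb⟩
      rw [hAB, Submodule.mem_bot] at this
      simp [this]
    obtain ⟨D, hBCD, hD⟩ := exists_complement_ext A (B ⊔ C) hABC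
    have hCD : C ≤ D := le_sup_right.trans hBCD
    have hBD : B ≤ D := le_sup_left.trans hBCD
    have hDadj : AdjP U D := by
      refine ⟨hU, ⟨?_, ?_, ?_⟩, ?_, ?_⟩
      · intro h
        exact hCadj.2.1.1 (le_bot_iff.mp (h ▸ hCD))
      · intro h
        apply hA
        have := hD.1
        rwa [h, inf_top_eq] at this
      · intro hess
        exact hess A hA (by rw [inf_comm]; exact hD.1)
      · intro h
        have hCU : C ≤ U := h ▸ hCD
        exact hCadj.2.1.1 (le_bot_iff.mp ((le_inf hCU le_rfl).trans hC.1.le))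
      · exact essential_mono (sup_le (hAU.trans le_sup_left) le_sup_right)
          (complement_sup_essential hD)
    have hDC : D = C := (hC₀uniq D hDadj).trans (hC₀uniq C hCadj).symm
    apply hB
    have : B ≤ U ⊓ C := le_inf hBU (hDC ▸ hBD)
    exact le_bot_iff.mp (this.trans hC.1.le)
  refine ⟨huniform, ?_, ?_⟩
  · -- part 2
    intro B hBU hBv
    obtain ⟨C, -, hC⟩ := exists_complement_ext U ⊥ (by simp)
    have hCadjU : AdjP U C := adjP_of_complement hU hC
    have hCcompB : IsComplementOf C B := by
      refine ⟨le_bot_iff.mp ((inf_le_inf_right C hBU).trans hC.1.le), ?_⟩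
      intro D hBD hCD
      refine hC.2 D ?_ hCD
      by_contra hne
      obtain ⟨x, hx, hx0⟩ := Submodule.exists_mem_ne_zero_of_ne_bot hne
      have hxU : x ∈ U := (Submodule.mem_inf.mp hx).1
      have hxD : x ∈ D := (Submodule.mem_inf.mp hx).2
      have hspan : B ⊓ Submodule.span R {x} ≠ ⊥ :=
        huniform.2 B _ hBU ((Submodule.span_singleton_le_iff_mem x U).mpr hxU) hBv.1
          (fun h => hx0 (Submodule.span_singleton_eq_bot.mp h))
      apply hspan
      refine le_bot_iff.mp (le_trans ?_ hBD.le)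
      exact inf_le_inf_left B ((Submodule.span_singleton_le_iff_mem x D).mpr hxD)
    have hCadjB : AdjP B C := adjP_of_complement hBv hCcompB
    refine ⟨C, hCadjB, ?_⟩
    intro V hV
    have hVU : V ≠ U := by
      intro h
      apply hU.2.2
      have := hV.2.2.2
      rwa [h, sup_eq_right.mpr hBU] at this
    have hVadjU : AdjP U V :=
      ⟨hU, hV.2.1, fun h => hVU h.symm,
        essential_mono (sup_le_sup_right hBU V) hV.2.2.2⟩
    exact (hC₀uniq V hVadjU).trans (hC₀uniq C hCadjU).symm
  · -- part 3
    intro C hC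
    have hCadj : AdjP U C := adjP_of_complement hU hC
    have hCC₀ : C = C₀ := hC₀uniq C hCadj
    refine { toComplementedLattice := ⟨?_⟩ }
    intro A'
    set A := A'.map C.subtype with hAdef
    have hAC : A ≤ C := Submodule.map_subtype_le C A'
    obtain ⟨D, -, hD⟩ := exists_complement_ext (U ⊔ A) ⊥ (by simp)
    have hUA : U ⊓ A = ⊥ := eq_bot_iff.mpr (le_trans (inf_le_inf_left U hAC) hC.1.le)
    have hUAD : U ⊓ (A ⊔ D) = ⊥ := by
      rw [eq_bot_iff]
      rintro u ⟨huU, huAD⟩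
      rw [SetLike.mem_coe] at huU huAD
      rw [Submodule.mem_sup] at huAD
      obtain ⟨a, ha, d, hd, hsum⟩ := huAD
      have hdm : d ∈ (U ⊔ A) ⊓ D := Submodule.mem_inf.mpr
        ⟨by
          have : d = u - a := by rw [← hsum]; abel
          rw [this]
          exact sub_mem (Submodule.mem_sup_left huU) (Submodule.mem_sup_right ha), hd⟩
      rw [hD.1, Submodule.mem_bot] at hdm
      subst hdm
      rw [add_zero] at hsum
      subst hsum
      have : a ∈ U ⊓ A := Submodule.mem_inf.mpr ⟨huU, ha⟩
      rw [hUA, Submodule.mem_bot] at this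
      simp [this]
    have hADadj : AdjP U (A ⊔ D) := by
      refine ⟨hU, ⟨?_, ?_, ?_⟩, ?_, ?_⟩
      · intro h
        rw [sup_eq_bot_iff] at h
        obtain ⟨hA0, hD0⟩ := h
        apply hU.2.2
        intro B hB hUB
        apply hB
        have := hD.2 B (by rwa [hA0, sup_bot_eq]) (by rw [hD0]; exact bot_le)
        rw [this, hD0]
      · intro h
        apply hU.1
        have := hUAD
        rwa [h, inf_top_eq] at this
      · intro hess
        exact hess U hU.1 (by rw [inf_comm]; exact hUAD)
      · intro h
        apply hU.1
        rw [eq_bot_iff, ← hUAD]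
        exact le_inf le_rfl h.le
      · rw [← sup_assoc]
        exact complement_sup_essential hD
    have hADC : A ⊔ D = C := (hC₀uniq _ hADadj).trans hCC₀.symm
    have hADbot : A ⊓ D = ⊥ :=
      eq_bot_iff.mpr (le_trans (inf_le_inf_right D le_sup_right) hD.1.le)
    have hmod : A ⊔ D ⊓ C = C := by
      rw [← sup_inf_assoc_of_le D hAC, hADC, inf_idem]
    refine ⟨(D ⊓ C).comap C.subtype, ?_, ?_⟩
    · rw [disjoint_iff, eq_bot_iff]
      rintro x ⟨hxA, hxB⟩
      rw [SetLike.mem_coe] at hxA hxB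
      rw [Submodule.mem_comap] at hxB
      have hxm : (x : M) ∈ A ⊓ D :=
        Submodule.mem_inf.mpr ⟨Submodule.mem_map_of_mem hxA, (Submodule.mem_inf.mp hxB).1⟩
      rw [hADbot, Submodule.mem_bot] at hxm
      have : x = 0 := by
        ext
        simpa using hxm
      simp [this]
    · rw [codisjoint_iff, eq_top_iff]
      rintro x -
      have hxC : (x : M) ∈ A ⊔ D ⊓ C := by rw [hmod]; exact x.2
      rw [Submodule.mem_sup] at hxC
      obtain ⟨a, ha, e, he, hsum⟩ := hxC
      rw [hAdef, Submodule.mem_map] at ha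
      obtain ⟨a', ha', rfl⟩ := ha
      have heC : e ∈ C := (Submodule.mem_inf.mp he).2
      refine Submodule.mem_sup.mpr ⟨a', ha', ⟨e, heC⟩, ?_, ?_⟩
      · rw [Submodule.mem_comap]
        exact he
      · ext
        simpa using hsum
end

section
/- If A and B are distinct submodules of M both of degree 1 in the proper sum-essential graph N(M) and A ∩ B ≠ 0, then A + B is also a vertex of N(M) of degree 1. -/
variable {R : Type*} [Ring R] {M : Type*} [AddCommGroup M] [Module R M]

/-- Essentiality is preserved by enlargement. -/
lemma ess_mono {N N' : Submodule R M} (h : N ≤ N') (hN : IsEssentialSubmodule N) :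
    IsEssentialSubmodule N' := fun B hB hcon =>
  hN B hB (le_bot_iff.mp (le_trans (inf_le_inf_right B h) hcon.le))

lemma top_ess : IsEssentialSubmodule (⊤ : Submodule R M) := by
  intro B hB
  simpa using hB

/-- A non-essential submodule is proper. -/
lemma ne_top_of_not_ess {N : Submodule R M} (h : ¬ IsEssentialSubmodule N) : N ≠ ⊤ := by
  rintro rfl; exact h top_ess

/-- Every submodule has a complement, and the join with a complement is essential. -/
lemma exists_compl_ess (U : Submodule R M) :
    ∃ C : Submodule R M, U ⊓ C = ⊥ ∧ IsEssentialSubmodule (U ⊔ C) := by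
  have hzorn : ∀ c ⊆ {D : Submodule R M | U ⊓ D = ⊥}, IsChain (· ≤ ·) c →
      ∃ ub ∈ {D : Submodule R M | U ⊓ D = ⊥}, ∀ z ∈ c, z ≤ ub := by
    intro c hcsub hchain
    rcases c.eq_empty_or_nonempty with rfl | hne
    · exact ⟨⊥, by simp, by simp⟩
    · refine ⟨sSup c, ?_, fun z hz => le_sSup hz⟩
      rw [Set.mem_setOf_eq, eq_bot_iff]
      rintro x ⟨hxU, hxs⟩
      obtain ⟨D, hDc, hxD⟩ := (Submodule.mem_sSup_of_directed hne hchain.directedOn).mp hxs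
      have : x ∈ U ⊓ D := ⟨hxU, hxD⟩
      rw [hcsub hDc] at this
      simpa using this
  obtain ⟨C, hCmem, hCmax⟩ := zorn_le₀ {D : Submodule R M | U ⊓ D = ⊥} hzorn
  · refine ⟨C, hCmem, ?_⟩
    intro D hD hcon
    apply hD
    -- show U ⊓ (C ⊔ D) = ⊥
    have key : U ⊓ (C ⊔ D) = ⊥ := by
      rw [eq_bot_iff]
      rintro x ⟨hxU, hxCD⟩
      obtain ⟨c, hc, d, hd, rfl⟩ := Submodule.mem_sup.mp hxCD
      have hdmem : d ∈ (U ⊔ C) ⊓ D := by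
        refine ⟨?_, hd⟩
        have : d = (c + d) - c := by abel
        rw [this]
        exact sub_mem (Submodule.mem_sup_left hxU) (Submodule.mem_sup_right hc)
      rw [hcon] at hdmem
      simp only [Submodule.mem_bot] at hdmem
      subst hdmem
      have : c ∈ U ⊓ C := ⟨by simpa using hxU, hc⟩
      rw [hCmem] at this
      simp only [Submodule.mem_bot] at this
      simp [this]
    have hDC : C ⊔ D = C := le_antisymm (hCmax key le_sup_left) le_sup_left
    have hDleC : D ≤ C := le_sup_right.trans hDC.le
    rw [eq_bot_iff]
    intro x hx
    have : x ∈ (U ⊔ C) ⊓ D := ⟨Submodule.mem_sup_right (hDleC hx), hx⟩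
    rwa [hcon] at this

/-- If `A ≠ B` both have degree 1 in `N(M)` and `A ∩ B ≠ 0`, then
`A + B` is also a vertex of `N(M)` of degree 1. -/
theorem stmt15 (A B : Submodule R M) (hAB : A ≠ B)
    (hA : ∃! C, AdjP A C) (hB : ∃! C, AdjP B C) (hint : A ⊓ B ≠ ⊥) :
    IsVertexP (A ⊔ B) ∧ ∃! C, AdjP (A ⊔ B) C := by
  obtain ⟨X, hX, hXuniq⟩ := hA
  obtain ⟨Y, hY, hYuniq⟩ := hB
  have hAv : IsVertexP A := hX.1
  have hBv : IsVertexP B := hY.1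
  -- a complement C of A ⊓ B
  obtain ⟨C, hC0, hCess⟩ := exists_compl_ess (A ⊓ B)
  -- C is a vertex of N(M)
  have hCbot : C ≠ ⊥ := by
    rintro rfl
    apply hAv.2.2
    have h2 : IsEssentialSubmodule (A ⊓ B) := by
      have h3 : ((A ⊓ B : Submodule R M) ⊔ ⊥) = A ⊓ B := by simp
      rw [h3] at hCess
      exact hCess
    exact ess_mono inf_le_left h2
  have hCnotess : ¬ IsEssentialSubmodule C := fun h => hint (by
    have := h (A ⊓ B) hint
    rw [inf_comm] at hC0
    exact absurd hC0 this)
  have hCv : IsVertexP C := ⟨hCbot, ne_top_of_not_ess hCnotess, hCnotess⟩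
  have hCA : C ≠ A := by
    rintro rfl
    exact hint (by rwa [inf_eq_left.mpr inf_le_left] at hC0)
  have hCB : C ≠ B := by
    rintro rfl
    exact hint (by rwa [inf_eq_left.mpr inf_le_right] at hC0)
  -- C is adjacent to both A and B, hence C = X = Y
  have hessAC : IsEssentialSubmodule (A ⊔ C) :=
    ess_mono (sup_le_sup_right inf_le_left C) hCess
  have hessBC : IsEssentialSubmodule (B ⊔ C) :=
    ess_mono (sup_le_sup_right inf_le_right C) hCess
  have hCX : C = X := hXuniq C ⟨hAv, hCv, hCA.symm, hessAC⟩
  have hCY : C = Y := hYuniq C ⟨hBv, hCv, hCB.symm, hessBC⟩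
  -- A ⊔ B is not essential
  have hnotess : ¬ IsEssentialSubmodule (A ⊔ B) := by
    intro h
    have : B = X := hXuniq B ⟨hAv, hBv, hAB, h⟩
    exact hCB (hCX.trans this.symm)
  have hABbot : A ⊔ B ≠ ⊥ := fun h => hAv.1 (le_bot_iff.mp (le_sup_left.trans h.le))
  have hABv : IsVertexP (A ⊔ B) := ⟨hABbot, ne_top_of_not_ess hnotess, hnotess⟩
  refine ⟨hABv, C, ⟨hABv, hCv, ?_, ess_mono (sup_le_sup_right le_sup_left C) hessAC⟩, ?_⟩
  · -- A ⊔ B ≠ C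
    rintro rfl
    exact hint (by rwa [inf_eq_left.mpr (le_trans inf_le_left le_sup_left)] at hC0)
  · -- uniqueness
    rintro Z ⟨_, hZv, hZne, hZess⟩
    by_cases hZB : Z = B
    · refine absurd ?_ hnotess
      rw [hZB] at hZess
      rwa [sup_assoc, sup_idem] at hZess
    by_cases hBZ : IsEssentialSubmodule (B ⊔ Z)
    · exact (hYuniq Z ⟨hBv, hZv, fun h => hZB h.symm, hBZ⟩).trans hCY.symm
    · -- B ⊔ Z is a vertex
      have hVbot : B ⊔ Z ≠ ⊥ := fun h => hBv.1 (le_bot_iff.mp (le_sup_left.trans h.le))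
      have hVv : IsVertexP (B ⊔ Z) := ⟨hVbot, ne_top_of_not_ess hBZ, hBZ⟩
      by_cases hVA : B ⊔ Z = A
      · exfalso
        have hBle : B ≤ A := le_sup_left.trans hVA.le
        have hZle : Z ≤ A := le_sup_right.trans hVA.le
        have : A ⊔ B ⊔ Z = A := by
          rw [sup_eq_left.mpr hBle, sup_eq_left.mpr hZle]
        rw [this] at hZess
        exact hAv.2.2 hZess
      · exfalso
        have hessAV : IsEssentialSubmodule (A ⊔ (B ⊔ Z)) := by
          rwa [← sup_assoc]
        have hVX : B ⊔ Z = X := hXuniq _ ⟨hAv, hVv, fun h => hVA h.symm, hessAV⟩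
        have hBleC : B ≤ C := hCX ▸ hVX ▸ le_sup_left
        exact hint (by rwa [inf_eq_left.mpr ((inf_le_right).trans hBleC)] at hC0)
end
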